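/- arXiv:1503.07704 — 2 statements merged into one kernel-verified Lean document; each statement's English description precedes it below -/
import Mathlib

section
/- Let N ≥ 1, p ∈ (2,∞), q_* := p − N/(N+1), η := 1/(N(p−2)+p), B_0 := ((p−2)/p)·η^{1/(p−1)}, and for A > 0 let B_A(y) := (A − B_0|y|^{p/(p−1)})_+^{(p−1)/(p−2)} for y ∈ ℝ^N (a C^1 function). Then there exists A_sub > 0, depending only on N and p, such that for every A ∈ (0, A_sub] and every y ∈ ℝ^N, |∇B_A(y)|^{q_*} + η(p−2)(N+1) y·∇B_A(y) − pη(N+1) B_A(y) ≤ 0. -/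
open MeasureTheory Real Metric

noncomputable section

abbrev Euc (N : ℕ) := EuclideanSpace ℝ (Fin N)

/-- The gradient of the (truncated) radial profile inside its support. -/
lemma barenblatt_gradient {E : Type*} [NormedAddCommGroup E] [InnerProductSpace ℝ E]
    [CompleteSpace E]
    (A B0 m α : ℝ) (hB0 : 0 < B0) (hm : 0 < m) (hα : 0 < α)
    (y : E) (hy : y ≠ 0) (hu : 0 < A - B0 * ‖y‖ ^ m) :
    HasGradientAt (fun z : E => (max (A - B0 * ‖z‖ ^ m) 0) ^ α)
      ((-(α * B0 * m * (A - B0 * ‖y‖ ^ m) ^ (α - 1) * ‖y‖ ^ (m - 2))) • y) y := by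
  have hr : 0 < ‖y‖ := norm_pos_iff.mpr hy
  have hsq : ∀ z : E, ((‖z‖ ^ 2 : ℝ)) ^ (m / 2) = ‖z‖ ^ m := by
    intro z
    rw [← Real.rpow_natCast ‖z‖ 2, ← Real.rpow_mul (norm_nonneg z)]
    congr 1
    push_cast; ring
  have ht0 : (0 : ℝ) < ‖y‖ ^ 2 := by positivity
  have hval : A - B0 * ((‖y‖ ^ 2 : ℝ)) ^ (m / 2) = A - B0 * ‖y‖ ^ m := by rw [hsq y]
  -- scalar derivative
  have hderiv1 : HasDerivAt (fun t : ℝ => t ^ (m / 2))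
      ((m / 2) * (‖y‖ ^ 2 : ℝ) ^ (m / 2 - 1)) (‖y‖ ^ 2) :=
    Real.hasDerivAt_rpow_const (Or.inl ht0.ne')
  have hderiv2 : HasDerivAt (fun t : ℝ => A - B0 * t ^ (m / 2))
      (-(B0 * ((m / 2) * (‖y‖ ^ 2 : ℝ) ^ (m / 2 - 1)))) (‖y‖ ^ 2) :=
    (hderiv1.const_mul B0).const_sub A
  have hderiv3 : HasDerivAt (fun t : ℝ => (A - B0 * t ^ (m / 2)) ^ α)
      ((-(B0 * ((m / 2) * (‖y‖ ^ 2 : ℝ) ^ (m / 2 - 1)))) * α *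
        (A - B0 * ‖y‖ ^ m) ^ (α - 1)) (‖y‖ ^ 2) := by
    have h := hderiv2.rpow_const (p := α) (Or.inl (by rw [hval]; exact hu.ne'))
    rwa [hval] at h
  have hfd_sq : HasFDerivAt (fun z : E => (‖z‖ ^ 2 : ℝ)) (2 • (innerSL ℝ y)) y :=
    (hasStrictFDerivAt_norm_sq y).hasFDerivAt
  have hcomp : HasFDerivAt (fun z : E => (A - B0 * ((‖z‖ ^ 2 : ℝ)) ^ (m / 2)) ^ α)
      (((-(B0 * ((m / 2) * (‖y‖ ^ 2 : ℝ) ^ (m / 2 - 1)))) * α *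
        (A - B0 * ‖y‖ ^ m) ^ (α - 1)) • (2 • (innerSL ℝ y))) y :=
    by have h := hderiv3.comp_hasFDerivAt y hfd_sq; exact h
  -- the open set where the max is irrelevant
  have hS : IsOpen {z : E | B0 * ‖z‖ ^ m < A} := by
    have hc : Continuous fun z : E => B0 * ‖z‖ ^ m :=
      continuous_const.mul (continuous_norm.rpow_const fun z => Or.inr hm.le)
    exact isOpen_lt hc continuous_const
  have hyS : B0 * ‖y‖ ^ m < A := by linarith
  have hEv : (fun z : E => (max (A - B0 * ‖z‖ ^ m) 0) ^ α) =ᶠ[nhds y]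
      (fun z : E => (A - B0 * ((‖z‖ ^ 2 : ℝ)) ^ (m / 2)) ^ α) := by
    refine Filter.eventuallyEq_of_mem (hS.mem_nhds hyS) fun z hz => ?_
    have hz' : (0 : ℝ) ≤ A - B0 * ‖z‖ ^ m := by
      have : B0 * ‖z‖ ^ m < A := hz
      linarith
    rw [hsq z, max_eq_left hz']
  have hfd : HasFDerivAt (fun z : E => (max (A - B0 * ‖z‖ ^ m) 0) ^ α)
      (((-(B0 * ((m / 2) * (‖y‖ ^ 2 : ℝ) ^ (m / 2 - 1)))) * α *
        (A - B0 * ‖y‖ ^ m) ^ (α - 1)) • (2 • (innerSL ℝ y))) y :=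
    hcomp.congr_of_eventuallyEq hEv
  have hCLM : (InnerProductSpace.toDual ℝ E)
        ((-(α * B0 * m * (A - B0 * ‖y‖ ^ m) ^ (α - 1) * ‖y‖ ^ (m - 2))) • y) =
      ((-(B0 * ((m / 2) * (‖y‖ ^ 2 : ℝ) ^ (m / 2 - 1)))) * α *
        (A - B0 * ‖y‖ ^ m) ^ (α - 1)) • (2 • (innerSL ℝ y)) := by
    apply ContinuousLinearMap.ext; intro z
    have ht : ((‖y‖ ^ 2 : ℝ)) ^ (m / 2 - 1) = ‖y‖ ^ (m - 2) := by
      rw [← Real.rpow_natCast ‖y‖ 2, ← Real.rpow_mul (norm_nonneg y)]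
      congr 1
      push_cast; ring
    simp only [InnerProductSpace.toDual_apply_apply, ContinuousLinearMap.smul_apply,
      innerSL_apply_apply, smul_eq_mul, real_inner_smul_left, nsmul_eq_mul, Nat.cast_ofNat, ht]
    ring
  exact hasGradientAt_iff_hasFDerivAt.mpr (by rw [hCLM]; exact hfd)

/-- The key scalar inequality inside the support of the Barenblatt profile. -/
lemma barenblatt_scalar_key (p q η K B0 m a Np1 A u r : ℝ)
    (hp : 2 < p) (hq1 : 1 < q) (hqp : p - 1 < q) (hη : 0 < η)
    (hK : K = η ^ (1 / (p - 1)))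
    (hB0 : B0 = (p - 2) / p * K)
    (hm : m = p / (p - 1)) (ha : a = 1 / (p - 2))
    (hNp1 : 1 ≤ Np1)
    (hA : 0 < A) (hu : 0 < u) (hr : 0 < r)
    (hur : u = A - B0 * r ^ m)
    (hAsub : A ≤ (p * η * Np1 * B0 ^ (q / p) / K ^ q) ^ (1 / (a * (q - 1) + q / p - 1))) :
    (K * u ^ a * r ^ (m - 1)) ^ q +
      η * (p - 2) * Np1 * (-(K * u ^ a * r ^ (m - 2)) * r ^ (2 : ℝ)) -
      p * η * Np1 * u ^ (1 + a) ≤ 0 := by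
  have hp2 : (0:ℝ) < p - 2 := by linarith
  have hp1 : (0:ℝ) < p - 1 := by linarith
  have hp0 : (0:ℝ) < p := by linarith
  have hKpos : 0 < K := by rw [hK]; positivity
  have hB0pos : 0 < B0 := by rw [hB0]; positivity
  have ha_pos : 0 < a := by rw [ha]; positivity
  have hNp1' : (0:ℝ) < Np1 := by linarith
  have hq0 : (0:ℝ) < q := by linarith
  have huA : u ≤ A := by
    have h1 : 0 ≤ B0 * r ^ m := by positivity
    linarith [hur]
  have hAu0 : (0:ℝ) ≤ A - u := by linarith
  have hrm : r ^ m = (A - u) / B0 := by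
    rw [eq_div_iff hB0pos.ne']
    linarith [hur]
  set δ : ℝ := a * (q - 1) + q / p - 1 with hδ_def
  have hδ : 0 < δ := by
    have h1 : 1 < a * (q - 1) := by
      rw [ha, div_mul_eq_mul_div, lt_div_iff₀ hp2, one_mul]
      linarith
    have h2 : 0 < q / p := by positivity
    simp only [hδ_def]; linarith
  -- rewrite the three terms
  have e1 : (u ^ a) ^ q = u ^ a * u ^ (a * (q - 1)) := by
    rw [← Real.rpow_mul hu.le]
    have h : a * q = a + a * (q - 1) := by ring
    rw [h, Real.rpow_add hu]
  have e2 : (r ^ (m - 1)) ^ q = ((A - u) / B0) ^ (q / p) := by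
    rw [← Real.rpow_mul hr.le]
    have h : (m - 1) * q = m * (q / p) := by
      rw [hm]; field_simp; ring
    rw [h, Real.rpow_mul hr.le, hrm]
  have L1 : (K * u ^ a * r ^ (m - 1)) ^ q
      = K ^ q * (u ^ a * u ^ (a * (q - 1))) * ((A - u) / B0) ^ (q / p) := by
    rw [Real.mul_rpow (by positivity) (by positivity),
      Real.mul_rpow (by positivity) (by positivity), e1, e2]
  have M : -(K * u ^ a * r ^ (m - 2)) * r ^ (2 : ℝ) = -(K * u ^ a * ((A - u) / B0)) := by
    have h : r ^ (m - 2) * r ^ (2 : ℝ) = r ^ m := by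
      rw [← Real.rpow_add hr]; norm_num
    rw [← hrm]
    linear_combination (-(K * u ^ a)) * h
  have T : u ^ (1 + a) = u * u ^ a := by
    rw [Real.rpow_add hu, Real.rpow_one]
  rw [L1, M, T]
  have key2 : η * (p - 2) * Np1 * (K * u ^ a * ((A - u) / B0)) + p * η * Np1 * (u * u ^ a)
      = p * η * Np1 * A * u ^ a := by
    rw [hB0]; field_simp; ring
  have main : K ^ q * (u ^ a * u ^ (a * (q - 1))) * ((A - u) / B0) ^ (q / p)
      ≤ p * η * Np1 * A * u ^ a := by
    have b1 : u ^ (a * (q - 1)) ≤ A ^ (a * (q - 1)) :=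
      Real.rpow_le_rpow hu.le huA (le_of_lt (mul_pos ha_pos (by linarith)))
    have b2 : ((A - u) / B0) ^ (q / p) ≤ (A / B0) ^ (q / p) := by
      exact Real.rpow_le_rpow (div_nonneg hAu0 hB0pos.le)
        (div_le_div_of_nonneg_right (by linarith) hB0pos.le)
        (le_of_lt (by positivity))
    have final : K ^ q * A ^ (a * (q - 1)) * (A / B0) ^ (q / p) ≤ p * η * Np1 * A := by
      have hD : (0:ℝ) < p * η * Np1 * B0 ^ (q / p) / K ^ q := by positivity
      have hAδ : A ^ δ ≤ p * η * Np1 * B0 ^ (q / p) / K ^ q := by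
        calc A ^ δ ≤ ((p * η * Np1 * B0 ^ (q / p) / K ^ q) ^ (1 / δ)) ^ δ :=
              Real.rpow_le_rpow hA.le hAsub hδ.le
          _ = p * η * Np1 * B0 ^ (q / p) / K ^ q := by
              rw [← Real.rpow_mul hD.le, one_div_mul_cancel hδ.ne', Real.rpow_one]
      have expand : K ^ q * A ^ (a * (q - 1)) * (A / B0) ^ (q / p)
          = (K ^ q / B0 ^ (q / p)) * A ^ δ * A := by
        rw [Real.div_rpow hA.le hB0pos.le]
        have h2 : A ^ (a * (q - 1)) * A ^ (q / p) = A ^ δ * A := by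
          rw [← Real.rpow_add hA,
            show a * (q - 1) + q / p = δ + 1 by simp only [hδ_def]; ring,
            Real.rpow_add hA, Real.rpow_one]
        linear_combination (K ^ q / B0 ^ (q / p)) * h2
      rw [expand]
      have hstep : (K ^ q / B0 ^ (q / p)) * A ^ δ ≤ p * η * Np1 := by
        rw [div_mul_eq_mul_div, div_le_iff₀ (by positivity)]
        calc K ^ q * A ^ δ ≤ K ^ q * (p * η * Np1 * B0 ^ (q / p) / K ^ q) := by gcongr
          _ = p * η * Np1 * B0 ^ (q / p) := by field_simp
      calc (K ^ q / B0 ^ (q / p)) * A ^ δ * A ≤ (p * η * Np1) * A :=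
            mul_le_mul_of_nonneg_right hstep hA.le
        _ = p * η * Np1 * A := by ring
    calc K ^ q * (u ^ a * u ^ (a * (q - 1))) * ((A - u) / B0) ^ (q / p)
        = (K ^ q * u ^ (a * (q - 1)) * ((A - u) / B0) ^ (q / p)) * u ^ a := by ring
      _ ≤ (K ^ q * A ^ (a * (q - 1)) * (A / B0) ^ (q / p)) * u ^ a := by
          apply mul_le_mul_of_nonneg_right _ (by positivity)
          gcongr
      _ ≤ (p * η * Np1 * A) * u ^ a := mul_le_mul_of_nonneg_right final (by positivity)
      _ = p * η * Np1 * A * u ^ a := by ring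
  linarith

/-- Lemma 3.2: there is `A_sub > 0`, depending only on `N` and `p`, such that for every
`A ∈ (0, A_sub]` the Barenblatt profile `B_A` satisfies the pointwise subsolution inequality
`|∇B_A|^{q_*} + η(p−2)(N+1) y·∇B_A − pη(N+1) B_A ≤ 0`. -/
theorem barenblattSubsolution
    (N : ℕ) (hN : 1 ≤ N) (p : ℝ) (hp : 2 < p)
    (q η B0 : ℝ)
    (hq : q = p - (N : ℝ) / ((N : ℝ) + 1))
    (hη : η = 1 / ((N : ℝ) * (p - 2) + p))
    (hB0 : B0 = (p - 2) / p * η ^ (1 / (p - 1)))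
    (B : ℝ → Euc N → ℝ)
    (hB : ∀ A y, B A y = (max (A - B0 * ‖y‖ ^ (p / (p - 1))) 0) ^ ((p - 1) / (p - 2))) :
    ∃ Asub : ℝ, 0 < Asub ∧
      ∀ A : ℝ, 0 < A → A ≤ Asub → ∀ y : Euc N,
        ‖gradient (B A) y‖ ^ q +
            η * (p - 2) * ((N : ℝ) + 1) * (inner ℝ y (gradient (B A) y) : ℝ) -
          p * η * ((N : ℝ) + 1) * B A y ≤ 0 := by
  have hp2 : (0:ℝ) < p - 2 := by linarith
  have hp1 : (0:ℝ) < p - 1 := by linarith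
  have hp0 : (0:ℝ) < p := by linarith
  have hN0 : (0:ℝ) ≤ (N : ℝ) := Nat.cast_nonneg N
  have hden : (0:ℝ) < (N : ℝ) * (p - 2) + p := by nlinarith
  have hηpos : 0 < η := by rw [hη]; exact one_div_pos.mpr hden
  set K : ℝ := η ^ (1 / (p - 1)) with hK_def
  have hKpos : 0 < K := Real.rpow_pos_of_pos hηpos _
  have hB0pos : 0 < B0 := by rw [hB0]; positivity
  set m : ℝ := p / (p - 1) with hm_def
  set α : ℝ := (p - 1) / (p - 2) with hα_def
  set a : ℝ := 1 / (p - 2) with ha_def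
  have hm0 : 0 < m := by rw [hm_def]; positivity
  have hα0 : 0 < α := by rw [hα_def]; positivity
  have hα1a : α = 1 + a := by
    rw [hα_def, ha_def]; field_simp; ring
  have hfrac : (N : ℝ) / ((N : ℝ) + 1) < 1 := by
    rw [div_lt_one (by linarith)]; linarith
  have hfrac0 : 0 ≤ (N : ℝ) / ((N : ℝ) + 1) := by positivity
  have hq1 : 1 < q := by rw [hq]; linarith
  have hqp : p - 1 < q := by rw [hq]; linarith
  have hq0 : (0:ℝ) < q := by linarith
  have hNp1 : (1:ℝ) ≤ (N : ℝ) + 1 := by linarith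
  set Asub : ℝ :=
    (p * η * ((N : ℝ) + 1) * B0 ^ (q / p) / K ^ q) ^ (1 / (a * (q - 1) + q / p - 1)) with
    hAsub_def
  have hAsubpos : 0 < Asub := Real.rpow_pos_of_pos (by positivity) _
  refine ⟨Asub, hAsubpos, fun A hA hAle y => ?_⟩
  have hBnonneg : ∀ z, 0 ≤ B A z := fun z => by
    rw [hB]; exact Real.rpow_nonneg (le_max_right _ _) _
  by_cases hBy : B A y = 0
  · -- zero region: y is a global minimum, gradient vanishes
    have hmin : IsLocalMin (B A) y :=
      Filter.Eventually.of_forall fun z => by rw [hBy]; exact hBnonneg z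
    have hf0 : fderiv ℝ (B A) y = 0 := hmin.fderiv_eq_zero
    have hg0 : gradient (B A) y = 0 := by
      simp only [gradient, hf0, map_zero]
    simp [hg0, hBy, Real.zero_rpow hq0.ne']
  by_cases hy0 : y = 0
  · -- center: y is a global maximum, gradient vanishes
    subst hy0
    have hB0z : B A 0 = A ^ α := by
      rw [hB]
      simp [Real.zero_rpow hm0.ne', max_eq_left hA.le]
    have hmax : IsLocalMax (B A) 0 := by
      refine Filter.Eventually.of_forall fun z => ?_
      rw [hB, hB0z]
      refine Real.rpow_le_rpow (le_max_right _ _) (max_le ?_ hA.le) hα0.le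
      have h1 : 0 ≤ B0 * ‖z‖ ^ m := by positivity
      linarith
    have hf0 : fderiv ℝ (B A) 0 = 0 := hmax.fderiv_eq_zero
    have hg0 : gradient (B A) 0 = 0 := by
      simp only [gradient, hf0, map_zero]
    rw [hg0, hB0z]
    have h1 : 0 ≤ p * η * ((N : ℝ) + 1) * A ^ α := by positivity
    simp [Real.zero_rpow hq0.ne']
    linarith
  · -- interior of the support
    have hu : 0 < A - B0 * ‖y‖ ^ m := by
      by_contra h
      push_neg at h
      exact hBy (by rw [hB, max_eq_right h, Real.zero_rpow hα0.ne'])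
    have hr : 0 < ‖y‖ := norm_pos_iff.mpr hy0
    have hgrad : HasGradientAt (B A)
        ((-(α * B0 * m * (A - B0 * ‖y‖ ^ m) ^ (α - 1) * ‖y‖ ^ (m - 2))) • y) y := by
      have h := barenblatt_gradient A B0 m α hB0pos hm0 hα0 y hy0 hu
      have hfun : (fun z : Euc N => (max (A - B0 * ‖z‖ ^ m) 0) ^ α) = B A :=
        funext fun z => (hB A z).symm
      rwa [hfun] at h
    set u : ℝ := A - B0 * ‖y‖ ^ m with hu_def
    set r : ℝ := ‖y‖ with hr_def
    -- useful scalar identities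
    have h1 : α * B0 * m = K := by
      rw [hα_def, hm_def, hB0]
      field_simp
    have h2 : α - 1 = a := by rw [hα1a]; ring
    have hC : α * B0 * m * u ^ (α - 1) * r ^ (m - 2) = K * u ^ a * r ^ (m - 2) := by
      rw [h2, h1]
    have hnorm : ‖(-(α * B0 * m * u ^ (α - 1) * r ^ (m - 2))) • y‖
        = K * u ^ a * r ^ (m - 1) := by
      rw [norm_smul, Real.norm_eq_abs, abs_neg, abs_of_nonneg (by positivity), hC]
      have h3 : r ^ (m - 2) * r = r ^ (m - 1) := by
        nth_rewrite 2 [← Real.rpow_one r]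
        rw [← Real.rpow_add hr]
        congr 1; ring
      rw [mul_assoc, h3]
    have hinner : (inner ℝ y ((-(α * B0 * m * u ^ (α - 1) * r ^ (m - 2))) • y) : ℝ)
        = -(K * u ^ a * r ^ (m - 2)) * r ^ (2 : ℝ) := by
      rw [real_inner_smul_right, real_inner_self_eq_norm_sq, hC]
      rw [← Real.rpow_natCast r 2]
      norm_num
    have hBval : B A y = u ^ (1 + a) := by
      rw [hB, max_eq_left hu.le, hα1a]
    rw [hgrad.gradient, hnorm, hinner, hBval]
    exact barenblatt_scalar_key p q η K B0 m a ((N : ℝ) + 1) A u r hp hq1 hqp hηpos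
      hK_def hB0 hm_def ha_def hNp1 hA hu hr hu_def hAle
end
end

section
/- Let (X,d) be a metric space, let Σ be a set of continuous curves Φ : [0,∞) → X, and define Ω := { f ∈ X : there exist Φ ∈ Σ and a sequence t_k → ∞ with d(Φ(t_k), f) → 0 }. Assume: (i) Ω is non-empty and compact; (ii) Ω is uniformly stable for Σ: for every ε > 0 there exists δ > 0 such that every Φ ∈ Σ with dist(Φ(0), Ω) ≤ δ satisfies dist(Φ(t), Ω) ≤ ε for all t ≥ 0. Let ϑ : [0,∞) → X be a continuous curve such that: (a) the orbit { ϑ(t) : t ≥ 0 } is relatively compact in X and the family of translates { s ↦ ϑ(s+τ) : τ > 0 } is relatively compact in C([0,T];X) (with the uniform metric) for every T > 0; (b) every curve Θ : [0,∞) → X that is, for each T > 0, the uniform limit on [0,T] of a sequence of translates s ↦ ϑ(s+t_k) with t_k → ∞, belongs to Σ. Then the ω-limit set of ϑ, namely { f ∈ X : there exists a sequence t_k → ∞ with d(ϑ(t_k), f) → 0 }, is contained in Ω. -/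
open Filter Metric Set
open scoped Topology

noncomputable section

lemma sTheorem_diag_extract {X : Type*} [MetricSpace X] (ϑ : ℝ → X)
    (htranslates : ∀ T : ℝ, 0 < T → ∀ τ : ℕ → ℝ, (∀ k, 0 < τ k) →
      ∃ φ : ℕ → ℕ, StrictMono φ ∧ ∃ Θ : ℝ → X,
        TendstoUniformlyOn (fun k s => ϑ (s + τ (φ k))) Θ atTop (Set.Icc 0 T))
    (a : ℕ → ℝ) (ha : ∀ k, 0 < a k) :
    ∃ ψ : ℕ → ℕ, StrictMono ψ ∧ ∃ Θ : ℝ → X, ∀ T : ℝ, 0 < T →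
      TendstoUniformlyOn (fun k s => ϑ (s + a (ψ k))) Θ atTop (Set.Icc 0 T) := by
  have step : ∀ (n : ℕ) (p : ℕ → ℕ), ∃ φ : ℕ → ℕ, StrictMono φ ∧ ∃ Θ : ℝ → X,
      TendstoUniformlyOn (fun k s => ϑ (s + a (p (φ k)))) Θ atTop (Set.Icc 0 (n+1)) := by
    intro n p
    exact htranslates (n+1) (by positivity) (fun k => a (p k)) (fun k => ha _)
  choose φ hφ Θ hΘ using step
  set p : ℕ → ℕ → ℕ := fun n => Nat.rec id (fun m pm => pm ∘ φ m pm) n with hpdef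
  have hps : ∀ n, p (n+1) = p n ∘ φ n (p n) := fun n => rfl
  have hpm : ∀ n, StrictMono (p n) := by
    intro n; induction n with
    | zero => exact strictMono_id
    | succ n ih => exact ih.comp (hφ n (p n))
  have hU : ∀ n, TendstoUniformlyOn (fun k s => ϑ (s + a (p (n+1) k))) (Θ n (p n))
      atTop (Set.Icc 0 (n+1)) := fun n => hΘ n (p n)
  have hsub : ∀ m k, ∃ u : ℕ → ℕ, (∀ j, j ≤ u j) ∧ p (m + k) = p m ∘ u := by
    intro m k; induction k with
    | zero => exact ⟨id, fun j => le_rfl, rfl⟩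
    | succ k ih =>
      obtain ⟨u, hu, hpu⟩ := ih
      refine ⟨u ∘ φ (m+k) (p (m+k)),
        fun j => le_trans (hφ (m+k) (p (m+k))).le_apply (hu _), ?_⟩
      have : p (m + (k+1)) = p (m+k) ∘ φ (m+k) (p (m+k)) := hps (m+k)
      rw [this, hpu]
      rfl
  set d : ℕ → ℕ := fun n => p (n+1) n with hddef
  have hd : StrictMono d := by
    apply strictMono_nat_of_lt_succ
    intro n
    have h1 : p (n+1) n < p (n+1) (n+1) := hpm (n+1) (Nat.lt_succ_self n)
    have h2 : p (n+1) (n+1) ≤ p (n+1) (φ (n+1) (p (n+1)) (n+1)) :=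
      (hpm (n+1)).monotone (hφ (n+1) (p (n+1))).le_apply
    have h3 : p (n+2) (n+1) = p (n+1) (φ (n+1) (p (n+1)) (n+1)) := rfl
    show p (n+1) n < p (n+2) (n+1)
    rw [h3]
    exact lt_of_lt_of_le h1 h2
  have hde : ∀ m : ℕ, ∃ e : ℕ → ℕ, Tendsto e atTop atTop ∧ ∀ n ≥ m, d n = p (m+1) (e n) := by
    intro m
    choose u hu hpu using hsub (m+1)
    refine ⟨fun n => u (n - m) n, ?_, ?_⟩
    · exact tendsto_atTop_mono (fun n => hu _ n) tendsto_id
    · intro n hn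
      have h1 : m + 1 + (n - m) = n + 1 := by omega
      have h2 := hpu (n - m)
      rw [h1] at h2
      show p (n+1) n = _
      rw [h2]
      rfl
  have hdiagU : ∀ m : ℕ, TendstoUniformlyOn (fun n s => ϑ (s + a (d n))) (Θ m (p m))
      atTop (Set.Icc 0 (m+1)) := by
    intro m
    obtain ⟨e, he, hed⟩ := hde m
    intro V hV
    filter_upwards [he.eventually ((hU m) V hV), eventually_ge_atTop m] with n h1n hmn x hx
    have := h1n x hx
    rw [hed n hmn]
    exact this
  have hagree : ∀ (m m' : ℕ) (x : ℝ), x ∈ Set.Icc (0:ℝ) (m+1) → x ∈ Set.Icc (0:ℝ) (m'+1) →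
      Θ m (p m) x = Θ m' (p m') x := by
    intro m m' x h h'
    exact tendsto_nhds_unique ((hdiagU m).tendsto_at h) ((hdiagU m').tendsto_at h')
  refine ⟨d, hd, fun x => Θ ⌈x⌉₊ (p ⌈x⌉₊) x, fun T hT => ?_⟩
  set m := ⌈T⌉₊ with hm
  intro V hV
  filter_upwards [hdiagU m V hV] with n hn x hx
  have hxm : x ∈ Set.Icc (0:ℝ) (m+1) := by
    refine ⟨hx.1, le_trans hx.2 (le_trans (Nat.le_ceil T) (by linarith))⟩
  have hxc : x ∈ Set.Icc (0:ℝ) ((⌈x⌉₊:ℝ)+1) :=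
    ⟨hx.1, le_trans (Nat.le_ceil x) (by linarith)⟩
  show (Θ ⌈x⌉₊ (p ⌈x⌉₊) x, ϑ (x + a (d n))) ∈ V
  rw [hagree ⌈x⌉₊ m x hxc hxm]
  exact hn x hxm

/-- The abstract stability theorem (S-theorem) of Galaktionov and Vázquez.

Curves are maps `ℝ → X` considered on `[0,∞)`. `S` plays the role of the set of solutions
of the autonomous limit equation, `Ω` is its ω-limit set, and `ϑ` is a solution of an
asymptotically small non-autonomous perturbation whose translates accumulate (uniformly on
compact time intervals) only on elements of `S`. Then the ω-limit set of `ϑ` is contained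
in `Ω`. -/
theorem sTheorem
    {X : Type*} [MetricSpace X]
    (S : Set (ℝ → X))
    (hScont : ∀ Φ ∈ S, ContinuousOn Φ (Set.Ici (0:ℝ)))
    (Ω : Set X)
    (hΩdef : Ω = {f : X | ∃ Φ ∈ S, ∃ t : ℕ → ℝ,
      Tendsto t atTop atTop ∧ Tendsto (fun k => Φ (t k)) atTop (𝓝 f)})
    (hΩne : Ω.Nonempty) (hΩcomp : IsCompact Ω)
    -- (ii) uniform stability of `Ω` for the autonomous flow `S`
    (hstable : ∀ ε : ℝ, 0 < ε → ∃ δ : ℝ, 0 < δ ∧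
      ∀ Φ ∈ S, Metric.infDist (Φ 0) Ω ≤ δ →
        ∀ t : ℝ, 0 ≤ t → Metric.infDist (Φ t) Ω ≤ ε)
    (ϑ : ℝ → X)
    (hϑcont : ContinuousOn ϑ (Set.Ici (0:ℝ)))
    -- (a) the orbit of `ϑ` is relatively compact in `X` …
    (horbit : ∃ K : Set X, IsCompact K ∧ ∀ t : ℝ, 0 ≤ t → ϑ t ∈ K)
    -- … and the family of translates of `ϑ` is relatively compact in `C([0,T];X)`
    (htranslates : ∀ T : ℝ, 0 < T → ∀ τ : ℕ → ℝ, (∀ k, 0 < τ k) →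
      ∃ φ : ℕ → ℕ, StrictMono φ ∧ ∃ Θ : ℝ → X,
        TendstoUniformlyOn (fun k s => ϑ (s + τ (φ k))) Θ atTop (Set.Icc 0 T))
    -- (b) every locally uniform limit of translates `ϑ(· + t_k)`, `t_k → ∞`, belongs to `S`
    (hlimit : ∀ Θ : ℝ → X,
      (∃ t : ℕ → ℝ, Tendsto t atTop atTop ∧
        ∀ T : ℝ, 0 < T →
          TendstoUniformlyOn (fun k s => ϑ (s + t k)) Θ atTop (Set.Icc 0 T)) →
      Θ ∈ S) :
    {f : X | ∃ t : ℕ → ℝ, Tendsto t atTop atTop ∧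
        Tendsto (fun k => ϑ (t k)) atTop (𝓝 f)} ⊆ Ω := by
  intro f hf
  obtain ⟨t, ht, htf⟩ := hf
  by_contra hfΩ
  obtain ⟨K, hK, hKmem⟩ := horbit
  have hΩclosed : IsClosed Ω := hΩcomp.isClosed
  have hε : 0 < infDist f Ω := (hΩclosed.notMem_iff_infDist_pos hΩne).mp hfΩ
  set ε := infDist f Ω with hεdef
  obtain ⟨δ0, hδ0, hstab0⟩ := hstable (ε/2) (by linarith)
  set δ := min δ0 (ε/2) with hδdef
  have hδ : 0 < δ := lt_min hδ0 (by linarith)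
  have hδε : δ ≤ ε/2 := min_le_right _ _
  have hstab : ∀ Φ ∈ S, infDist (Φ 0) Ω ≤ δ → ∀ s : ℝ, 0 ≤ s → infDist (Φ s) Ω ≤ ε/2 :=
    fun Φ hΦ h0 s hs => hstab0 Φ hΦ (h0.trans (min_le_left _ _)) s hs
  -- a generic way to produce points of `Ω` as subsequential limits of curves in `S`
  have homega : ∀ Θ : ℝ → X, Θ ∈ S → (∀ s : ℝ, 0 ≤ s → Θ s ∈ K) →
      ∃ g ∈ Ω, ∃ n : ℕ → ℕ, StrictMono n ∧
        Tendsto (fun i => Θ ((n i : ℕ) : ℝ)) atTop (𝓝 g) := by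
    intro Θ hΘS horb
    obtain ⟨g, hgK, n, hn, hgt⟩ := hK.tendsto_subseq
      (x := fun i : ℕ => Θ (i : ℝ)) (fun i => horb i (Nat.cast_nonneg i))
    refine ⟨g, ?_, n, hn, hgt⟩
    rw [hΩdef]
    exact ⟨Θ, hΘS, fun i => ((n i : ℕ) : ℝ),
      tendsto_natCast_atTop_atTop.comp hn.tendsto_atTop, hgt⟩
  -- Step A : there are arbitrarily large times at which `ϑ` is `δ`-close to `Ω`
  have hA : ∀ M : ℝ, ∃ τ : ℝ, M < τ ∧ 0 < τ ∧ infDist (ϑ τ) Ω < δ := by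
    intro M
    obtain ⟨ψ, hψ, Θ, hTUO⟩ := sTheorem_diag_extract ϑ htranslates
      (fun k => max (t k) 1) (fun k => lt_of_lt_of_le one_pos (le_max_right _ _))
    have htend : Tendsto (fun k => max (t (ψ k)) 1) atTop atTop :=
      tendsto_atTop_mono (fun k => le_max_left _ _) (ht.comp hψ.tendsto_atTop)
    have hΘS : Θ ∈ S := hlimit Θ ⟨fun k => max (t (ψ k)) 1, htend, hTUO⟩
    have hpt : ∀ s : ℝ, 0 ≤ s →
        Tendsto (fun k => ϑ (s + max (t (ψ k)) 1)) atTop (𝓝 (Θ s)) := by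
      intro s hs
      exact (hTUO (s+1) (by linarith)).tendsto_at ⟨hs, by linarith⟩
    have horbK : ∀ s : ℝ, 0 ≤ s → Θ s ∈ K := by
      intro s hs
      refine hK.isClosed.mem_of_tendsto (hpt s hs)
        (Filter.Eventually.of_forall (fun k => hKmem _ ?_))
      have := le_max_right (t (ψ k)) 1
      linarith
    obtain ⟨g, hgΩ, n, hn, hgt⟩ := homega Θ hΘS horbK
    have hginf : Tendsto (fun i => infDist (Θ ((n i : ℕ):ℝ)) Ω) atTop (𝓝 0) := by
      have := ((continuous_infDist_pt Ω).tendsto g).comp hgt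
      rwa [infDist_zero_of_mem hgΩ] at this
    obtain ⟨N, hN⟩ := exists_nat_gt M
    have hev : ∀ᶠ i in atTop, N ≤ n i ∧ infDist (Θ ((n i : ℕ):ℝ)) Ω < δ/2 := by
      filter_upwards [eventually_ge_atTop N, hginf.eventually_lt_const (by linarith : (0:ℝ) < δ/2)]
        with i hi h2
      exact ⟨le_trans hi hn.le_apply, h2⟩
    obtain ⟨i, hiN, hidist⟩ := hev.exists
    have hrTUO := Metric.tendstoUniformlyOn_iff.mp
      (hTUO (((n i : ℕ):ℝ)+1) (by positivity)) (δ/2) (by linarith)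
    obtain ⟨k0, hk0⟩ := hrTUO.exists
    have hx : ((n i : ℕ):ℝ) ∈ Set.Icc (0:ℝ) (((n i : ℕ):ℝ)+1) :=
      ⟨Nat.cast_nonneg _, by linarith⟩
    have hd1 := hk0 ((n i : ℕ):ℝ) hx
    have h1 : (1:ℝ) ≤ max (t (ψ k0)) 1 := le_max_right _ _
    have hNn : (N:ℝ) ≤ ((n i : ℕ):ℝ) := by exact_mod_cast hiN
    refine ⟨((n i : ℕ):ℝ) + max (t (ψ k0)) 1, by linarith, by linarith [show (0:ℝ) ≤ ((n i : ℕ):ℝ) from Nat.cast_nonneg _], ?_⟩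
    calc infDist (ϑ (((n i : ℕ):ℝ) + max (t (ψ k0)) 1)) Ω
        ≤ infDist (Θ ((n i : ℕ):ℝ)) Ω
          + dist (ϑ (((n i : ℕ):ℝ) + max (t (ψ k0)) 1)) (Θ ((n i : ℕ):ℝ)) :=
        infDist_le_infDist_add_dist
      _ < δ/2 + δ/2 := by
        refine add_lt_add hidist ?_
        rw [dist_comm]
        exact hd1
      _ = δ := by ring
  -- continuity facts
  have htΩ : Tendsto (fun m => infDist (ϑ (t m)) Ω) atTop (𝓝 ε) :=
    ((continuous_infDist_pt Ω).tendsto f).comp htf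
  have htδ : ∀ᶠ m in atTop, δ < infDist (ϑ (t m)) Ω :=
    htΩ.eventually_const_lt (by linarith)
  -- Step B : crossing times
  have hcross : ∀ n : ℕ, ∃ (A : ℝ) (k : ℕ), (n:ℝ) < A ∧ n ≤ k ∧ A < t k ∧
      infDist (ϑ A) Ω ≤ δ ∧ ∀ s : ℝ, A < s → s ≤ t k → δ < infDist (ϑ s) Ω := by
    intro n
    obtain ⟨τ, hτM, hτ0, hτδ⟩ := hA n
    obtain ⟨k, hk1, hk2, hk3⟩ : ∃ k, τ ≤ t k ∧ δ < infDist (ϑ (t k)) Ω ∧ n ≤ k := by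
      obtain ⟨k, h1, h2, h3⟩ :=
        ((ht.eventually_ge_atTop τ).and (htδ.and (eventually_ge_atTop n))).exists
      exact ⟨k, h1, h2, h3⟩
    have hϑd : ContinuousOn (fun s => infDist (ϑ s) Ω) (Set.Ici (0:ℝ)) :=
      (continuous_infDist_pt Ω).comp_continuousOn hϑcont
    set E : Set ℝ := {s | s ∈ Set.Icc τ (t k) ∧ infDist (ϑ s) Ω ≤ δ} with hEdef
    have hEc : IsCompact E := by
      refine isCompact_Icc.of_isClosed_subset ?_ (fun s hs => hs.1)
      have hEeq : E = Set.Icc τ (t k) ∩ (fun s => infDist (ϑ s) Ω) ⁻¹' (Set.Iic δ) := rfl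
      rw [hEeq]
      exact (hϑd.mono (fun s hs => le_trans hτ0.le hs.1)).preimage_isClosed_of_isClosed
        isClosed_Icc isClosed_Iic
    have hEne : E.Nonempty := ⟨τ, ⟨le_refl τ, hk1⟩, hτδ.le⟩
    obtain ⟨⟨hA1, hA2⟩, hA3⟩ := hEc.sSup_mem hEne
    have hAlt : sSup E < t k := by
      rcases lt_or_eq_of_le hA2 with h | h
      · exact h
      · exact absurd (h ▸ hA3) (not_le.mpr hk2)
    refine ⟨sSup E, k, lt_of_lt_of_le hτM hA1, hk3, hAlt, hA3, ?_⟩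
    intro s hAs hstk
    by_contra hcon
    push_neg at hcon
    have hsmem : s ∈ E := ⟨⟨le_trans hA1 hAs.le, hstk⟩, hcon⟩
    have : s ≤ sSup E := le_csSup hEc.bddAbove hsmem
    linarith
  choose A kk hA1 hA2 hA3 hA4 hA5 using hcross
  have hApos : ∀ n, 0 < A n := fun n => lt_of_le_of_lt (Nat.cast_nonneg n) (hA1 n)
  obtain ⟨ψ, hψ, Θ, hTUO⟩ := sTheorem_diag_extract ϑ htranslates A hApos
  have hAψtend : Tendsto (fun j => A (ψ j)) atTop atTop :=
    tendsto_atTop_mono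
      (fun j => le_trans (by exact_mod_cast Nat.cast_le.mpr hψ.le_apply) (hA1 (ψ j)).le)
      tendsto_natCast_atTop_atTop
  have hΘS : Θ ∈ S := hlimit Θ ⟨fun j => A (ψ j), hAψtend, hTUO⟩
  have hpt : ∀ s : ℝ, 0 ≤ s → Tendsto (fun j => ϑ (s + A (ψ j))) atTop (𝓝 (Θ s)) :=
    fun s hs => (hTUO (s+1) (by linarith)).tendsto_at ⟨hs, by linarith⟩
  have hΘ0 : infDist (Θ 0) Ω ≤ δ := by
    have hcmp := ((continuous_infDist_pt Ω).tendsto (Θ 0)).comp (hpt 0 le_rfl)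
    refine le_of_tendsto hcmp (Filter.Eventually.of_forall (fun j => ?_))
    simpa [Function.comp] using (hA4 (ψ j))
  have hΘΩ : ∀ s : ℝ, 0 ≤ s → infDist (Θ s) Ω ≤ ε/2 := fun s hs => hstab Θ hΘS hΘ0 s hs
  set B : ℕ → ℝ := fun j => t (kk (ψ j)) - A (ψ j) with hBdef
  have hBpos : ∀ j, 0 < B j := fun j => sub_pos.mpr (hA3 (ψ j))
  by_cases hCase : ∃ C : ℝ, ∃ᶠ j in atTop, B j ≤ C
  · -- Case 1: along a subsequence the whole window [A, t k] has bounded length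
    obtain ⟨C, hfreq⟩ := hCase
    obtain ⟨j1, hj1, hj1C⟩ := extraction_of_frequently_atTop hfreq
    obtain ⟨L, hL, j2, hj2, hBL⟩ := isCompact_Icc.tendsto_subseq
      (x := fun i => B (j1 i)) (fun i => ⟨(hBpos _).le, hj1C i⟩)
    set j : ℕ → ℕ := fun i => j1 (j2 i) with hjdef
    have hjmono : StrictMono j := hj1.comp hj2
    have hC0 : 0 < C := lt_of_lt_of_le (hBpos (j1 0)) (hj1C 0)
    have hLmem : (0:ℝ) ≤ L := hL.1
    have hΘBL : Tendsto (fun i => Θ (B (j i))) atTop (𝓝 (Θ L)) := by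
      have hcw : ContinuousWithinAt Θ (Set.Ici 0) L := hScont Θ hΘS L hLmem
      refine hcw.tendsto.comp ?_
      exact tendsto_nhdsWithin_of_tendsto_nhds_of_eventually_within _ hBL
        (Filter.Eventually.of_forall (fun i => (hBpos _).le))
    have hto : Tendsto (fun i => ϑ (t (kk (ψ (j i))))) atTop (𝓝 (Θ L)) := by
      rw [Metric.tendsto_nhds]
      intro η hη
      have e1 := Metric.tendstoUniformlyOn_iff.mp (hTUO (C+1) (by linarith)) (η/2) (by linarith)
      have e2 := (Metric.tendsto_nhds.mp hΘBL) (η/2) (by linarith)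
      filter_upwards [hjmono.tendsto_atTop.eventually e1, e2] with i h1 h2
      have hBmem : B (j i) ∈ Set.Icc (0:ℝ) (C+1) :=
        ⟨(hBpos _).le, le_trans (hj1C (j2 i)) (by linarith)⟩
      have h1' := h1 (B (j i)) hBmem
      have harg : B (j i) + A (ψ (j i)) = t (kk (ψ (j i))) := sub_add_cancel _ _
      calc dist (ϑ (t (kk (ψ (j i))))) (Θ L)
          ≤ dist (ϑ (t (kk (ψ (j i))))) (Θ (B (j i))) + dist (Θ (B (j i))) (Θ L) :=
          dist_triangle _ _ _
        _ < η/2 + η/2 := by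
          refine add_lt_add ?_ h2
          rw [← harg, dist_comm]
          exact h1'
        _ = η := by ring
    have hto2 : Tendsto (fun i => ϑ (t (kk (ψ (j i))))) atTop (𝓝 f) := by
      refine htf.comp (tendsto_atTop_mono (fun i => ?_) tendsto_id)
      calc i ≤ j i := hjmono.le_apply
        _ ≤ ψ (j i) := hψ.le_apply
        _ ≤ kk (ψ (j i)) := hA2 _
    have hfΘ : f = Θ L := tendsto_nhds_unique hto2 hto
    have hcontra := hΘΩ L hLmem
    rw [← hfΘ, ← hεdef] at hcontra
    linarith
  · -- Case 2: the windows become infinitely long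
    push_neg at hCase
    have hBtop : ∀ C : ℝ, ∀ᶠ jj in atTop, C < B jj := by
      intro C
      have h := hCase C
      exact h
    have hΘδ : ∀ s : ℝ, 0 < s → δ ≤ infDist (Θ s) Ω := by
      intro s hs
      have hcmp := ((continuous_infDist_pt Ω).tendsto (Θ s)).comp (hpt s hs.le)
      refine ge_of_tendsto hcmp ?_
      filter_upwards [hBtop s] with jj hB
      have hlt : A (ψ jj) < s + A (ψ jj) := lt_add_of_pos_left _ hs
      have hle : s + A (ψ jj) ≤ t (kk (ψ jj)) := by
        have : s < t (kk (ψ jj)) - A (ψ jj) := hB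
        linarith
      exact (hA5 (ψ jj) _ hlt hle).le
    have horbK : ∀ s : ℝ, 0 ≤ s → Θ s ∈ K := by
      intro s hs
      refine hK.isClosed.mem_of_tendsto (hpt s hs)
        (Filter.Eventually.of_forall (fun jj => hKmem _ ?_))
      have := hApos (ψ jj)
      linarith
    obtain ⟨g, hgΩ, n, hn, hgt⟩ := homega Θ hΘS horbK
    have hgδ : δ ≤ infDist g Ω := by
      refine ge_of_tendsto (((continuous_infDist_pt Ω).tendsto g).comp hgt) ?_
      filter_upwards [eventually_ge_atTop 1] with i hi
      have h1 : 1 ≤ n i := le_trans hi hn.le_apply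
      have h2 : (0:ℝ) < ((n i : ℕ):ℝ) := by exact_mod_cast Nat.lt_of_lt_of_le Nat.zero_lt_one h1
      exact hΘδ _ h2
    rw [infDist_zero_of_mem hgΩ] at hgδ
    linarith
end
end
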